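/- arXiv:1007.0787 — 4 statements merged into one kernel-verified Lean document; each statement's English description precedes it below -/
import Mathlib

section
/- Let R be a commutative ring and let a, b ∈ R satisfy a·b = 2. Let A = R[X]/(X² − a·X) and let x denote the image of X in A. Then the R-algebra homomorphisms Δ : A → A ⊗_R A determined by x ↦ x ⊗ 1 + 1 ⊗ x − b·(x ⊗ x), ε : A → R determined by x ↦ 0, and σ : A → A determined by x ↦ x are well defined and make A into a Hopf algebra over R (Δ is coassociative with counit ε, Δ is cocommutative, and σ is an antipode for this bialgebra structure). -/
open TensorProduct

section Aux

variable {R : Type*} [CommRing R]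

lemma tateOort_aux_aeval {S : Type*} [CommRing S] [Algebra R S] (a : R) (t : S)
    (h : t * t = algebraMap R S a * t) :
    Polynomial.aeval t (Polynomial.X ^ 2 - Polynomial.C a * Polynomial.X) = 0 := by
  simp [sq, h]

lemma tateOort_aux_sq (a b : R) (hab : a * b = 2)
    {A : Type*} [CommRing A] [Algebra R A] (x : A) (hx : x * x = algebraMap R A a * x) :
    (x ⊗ₜ[R] 1 + 1 ⊗ₜ[R] x - b • (x ⊗ₜ[R] x)) * (x ⊗ₜ[R] 1 + 1 ⊗ₜ[R] x - b • (x ⊗ₜ[R] x))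
      = algebraMap R (A ⊗[R] A) a * (x ⊗ₜ[R] 1 + 1 ⊗ₜ[R] x - b • (x ⊗ₜ[R] x)) := by
  have hx' : x * x = a • x := by rw [hx, Algebra.smul_def]
  simp only [Algebra.algebraMap_eq_smul_one, mul_sub, sub_mul, mul_add, add_mul,
    Algebra.TensorProduct.tmul_mul_tmul, mul_smul_comm, smul_mul_assoc, smul_smul,
    one_mul, mul_one, hx', ← smul_tmul', tmul_smul]
  match_scalars <;> first
    | ring1
    | linear_combination (a * b - 1) * hab

end Aux

namespace AdjoinRoot

variable {R : Type*} [CommRing R] {S : Type*} [CommRing S] [Algebra R S]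

/-- The `R`-algebra map out of `AdjoinRoot f` sending `root f` to `x`. -/
noncomputable def liftHom (f : Polynomial R) (x : S) (hfx : Polynomial.aeval x f = 0) : AdjoinRoot f →ₐ[R] S :=
  { lift (algebraMap R S) x ((Polynomial.aeval_def x f).symm.trans hfx) with
    commutes' := fun r => by simp [AdjoinRoot.algebraMap_eq] }

@[simp]
theorem liftHom_root (f : Polynomial R) (x : S) (hfx : Polynomial.aeval x f = 0) :
    liftHom f x hfx (root f) = x := by
  simp [liftHom]

end AdjoinRoot


set_option maxHeartbeats 1600000 in
/-- **The Hopf algebra of the Tate–Oort group scheme `G_{a,b}`.**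
Let `R` be a commutative ring and `a b ∈ R` with `a * b = 2`, and let
`A = R[X]/(X² - a·X)` with `x` the class of `X`.  Then there are `R`-algebra
homomorphisms `Δ : A → A ⊗[R] A` with `Δ x = x ⊗ 1 + 1 ⊗ x - b·(x ⊗ x)`,
`ε : A → R` with `ε x = 0`, and `σ : A → A` with `σ x = x`, and they make `A`
a (cocommutative) Hopf algebra over `R`: `Δ` is coassociative, `ε` is a
two-sided counit, `Δ` is cocommutative, and `σ` is a (two-sided) antipode. -/
theorem stmt_1 (R : Type*) [CommRing R] (a b : R) (hab : a * b = 2) :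
    ∃ (Δ : AdjoinRoot (Polynomial.X ^ 2 - Polynomial.C a * Polynomial.X) →ₐ[R]
          (AdjoinRoot (Polynomial.X ^ 2 - Polynomial.C a * Polynomial.X) ⊗[R]
            AdjoinRoot (Polynomial.X ^ 2 - Polynomial.C a * Polynomial.X)))
      (ε : AdjoinRoot (Polynomial.X ^ 2 - Polynomial.C a * Polynomial.X) →ₐ[R] R)
      (σ : AdjoinRoot (Polynomial.X ^ 2 - Polynomial.C a * Polynomial.X) →ₐ[R]
          AdjoinRoot (Polynomial.X ^ 2 - Polynomial.C a * Polynomial.X)),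
      -- the comultiplication is determined by `x ↦ x ⊗ 1 + 1 ⊗ x - b·(x ⊗ x)`
      Δ (AdjoinRoot.root _) =
          AdjoinRoot.root _ ⊗ₜ[R] 1 + 1 ⊗ₜ[R] AdjoinRoot.root _
            - b • (AdjoinRoot.root _ ⊗ₜ[R] AdjoinRoot.root _) ∧
      -- the counit is determined by `x ↦ 0`
      ε (AdjoinRoot.root _) = 0 ∧
      -- the antipode is determined by `x ↦ x`
      σ (AdjoinRoot.root _) = AdjoinRoot.root _ ∧
      -- coassociativity of `Δ`
      (∀ z, (Algebra.TensorProduct.assoc R R R _ _ _)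
            ((Algebra.TensorProduct.map Δ (AlgHom.id R _)) (Δ z))
          = (Algebra.TensorProduct.map (AlgHom.id R _) Δ) (Δ z)) ∧
      -- `ε` is a left counit for `Δ`
      (∀ z, (Algebra.TensorProduct.lid R _)
            ((Algebra.TensorProduct.map ε (AlgHom.id R _)) (Δ z)) = z) ∧
      -- `ε` is a right counit for `Δ`
      (∀ z, (Algebra.TensorProduct.rid R R _)
            ((Algebra.TensorProduct.map (AlgHom.id R _) ε) (Δ z)) = z) ∧
      -- cocommutativity of `Δ`
      (∀ z, (Algebra.TensorProduct.comm R _ _) (Δ z) = Δ z) ∧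
      -- `σ` is a left antipode
      (∀ z, (Algebra.TensorProduct.lmul' R)
            ((Algebra.TensorProduct.map σ (AlgHom.id R _)) (Δ z))
          = algebraMap R _ (ε z)) ∧
      -- `σ` is a right antipode
      (∀ z, (Algebra.TensorProduct.lmul' R)
            ((Algebra.TensorProduct.map (AlgHom.id R _) σ) (Δ z))
          = algebraMap R _ (ε z)) := by
  set p : Polynomial R := Polynomial.X ^ 2 - Polynomial.C a * Polynomial.X with hp
  set A := AdjoinRoot p with hA
  have hx : AdjoinRoot.root p * AdjoinRoot.root p
      = algebraMap R A a * AdjoinRoot.root p := by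
    have := AdjoinRoot.eval₂_root p
    simp [hp, sq, sub_eq_zero] at this
    exact this
  set T : A ⊗[R] A := AdjoinRoot.root p ⊗ₜ[R] 1 + 1 ⊗ₜ[R] AdjoinRoot.root p
      - b • (AdjoinRoot.root p ⊗ₜ[R] AdjoinRoot.root p) with hT
  have hTsq : T * T = algebraMap R (A ⊗[R] A) a * T := tateOort_aux_sq a b hab _ hx
  have h0 : (0 : R) * 0 = algebraMap R R a * 0 := by simp
  refine ⟨AdjoinRoot.liftHom p T (tateOort_aux_aeval a T hTsq),
      AdjoinRoot.liftHom p 0 (tateOort_aux_aeval a 0 h0),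
      AdjoinRoot.liftHom p (AdjoinRoot.root p) (tateOort_aux_aeval a _ hx), ?_, ?_, ?_, ?_, ?_, ?_, ?_, ?_, ?_⟩
  · apply AdjoinRoot.liftHom_root
  · apply AdjoinRoot.liftHom_root
  · apply AdjoinRoot.liftHom_root
  · -- coassociativity
    have h : (Algebra.TensorProduct.assoc R R R A A A).toAlgHom.comp
          ((Algebra.TensorProduct.map (AdjoinRoot.liftHom p T (tateOort_aux_aeval a T hTsq))
              (AlgHom.id R A)).comp (AdjoinRoot.liftHom p T (tateOort_aux_aeval a T hTsq)))
        = (Algebra.TensorProduct.map (AlgHom.id R A)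
              (AdjoinRoot.liftHom p T (tateOort_aux_aeval a T hTsq))).comp
            (AdjoinRoot.liftHom p T (tateOort_aux_aeval a T hTsq)) := by
      apply AdjoinRoot.algHom_ext
      simp only [AlgHom.comp_apply, AlgEquiv.toAlgHom_eq_coe, AlgHom.coe_coe,
        AdjoinRoot.liftHom_root, hT, map_sub, map_add, map_smul, map_one,
        Algebra.TensorProduct.map_tmul, AlgHom.id_apply, AdjoinRoot.liftHom_root,
        tmul_sub, sub_tmul, tmul_add, add_tmul, tmul_smul, ← smul_tmul',
        Algebra.TensorProduct.one_def, Algebra.TensorProduct.assoc_tmul, AlgEquiv.coe_algHom]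
      module
    exact fun z => DFunLike.congr_fun h z
  · -- left counit
    have h : (Algebra.TensorProduct.lid R A).toAlgHom.comp
          ((Algebra.TensorProduct.map (AdjoinRoot.liftHom p 0 (tateOort_aux_aeval a 0 h0))
              (AlgHom.id R A)).comp (AdjoinRoot.liftHom p T (tateOort_aux_aeval a T hTsq)))
        = AlgHom.id R A := by
      apply AdjoinRoot.algHom_ext
      simp only [AlgHom.comp_apply, AlgEquiv.toAlgHom_eq_coe, AlgHom.coe_coe,
        AdjoinRoot.liftHom_root, hT, map_sub, map_add, map_smul, map_one,
        Algebra.TensorProduct.map_tmul, AlgHom.id_apply, AdjoinRoot.liftHom_root,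
        zero_tmul, tmul_zero, Algebra.TensorProduct.lid_tmul, smul_zero, one_smul]
      simp
      rfl
    exact fun z => DFunLike.congr_fun h z
  · -- right counit
    have h : (Algebra.TensorProduct.rid R R A).toAlgHom.comp
          ((Algebra.TensorProduct.map (AlgHom.id R A)
              (AdjoinRoot.liftHom p 0 (tateOort_aux_aeval a 0 h0))).comp
            (AdjoinRoot.liftHom p T (tateOort_aux_aeval a T hTsq)))
        = AlgHom.id R A := by
      apply AdjoinRoot.algHom_ext
      simp only [AlgHom.comp_apply, AlgEquiv.toAlgHom_eq_coe, AlgHom.coe_coe,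
        AdjoinRoot.liftHom_root, hT, map_sub, map_add, map_smul, map_one,
        Algebra.TensorProduct.map_tmul, AlgHom.id_apply, AdjoinRoot.liftHom_root,
        zero_tmul, tmul_zero, Algebra.TensorProduct.rid_tmul, smul_zero, one_smul]
      simp
      rfl
    exact fun z => DFunLike.congr_fun h z
  · -- cocommutativity
    have h : (Algebra.TensorProduct.comm R A A).toAlgHom.comp
          (AdjoinRoot.liftHom p T (tateOort_aux_aeval a T hTsq))
        = AdjoinRoot.liftHom p T (tateOort_aux_aeval a T hTsq) := by
      apply AdjoinRoot.algHom_ext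
      simp only [AlgHom.comp_apply, AlgEquiv.toAlgHom_eq_coe, AlgHom.coe_coe,
        AdjoinRoot.liftHom_root, hT, map_sub, map_add, map_smul, map_one,
        Algebra.TensorProduct.comm_tmul, AlgEquiv.coe_algHom]
      abel
    exact fun z => DFunLike.congr_fun h z
  · -- left antipode
    have hba : b * a = 2 := by rw [mul_comm]; exact hab
    have h : (Algebra.TensorProduct.lmul' R (S := A)).comp
          ((Algebra.TensorProduct.map (AdjoinRoot.liftHom p (AdjoinRoot.root p) (tateOort_aux_aeval a _ hx))
              (AlgHom.id R A)).comp (AdjoinRoot.liftHom p T (tateOort_aux_aeval a T hTsq)))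
        = (Algebra.ofId R A).comp (AdjoinRoot.liftHom p 0 (tateOort_aux_aeval a 0 h0)) := by
      apply AdjoinRoot.algHom_ext
      simp only [AlgHom.comp_apply, AdjoinRoot.liftHom_root, hT, map_sub, map_add, map_smul, map_one,
        Algebra.TensorProduct.map_tmul, AlgHom.id_apply,
        Algebra.TensorProduct.lmul'_apply_tmul, one_mul, mul_one, hx, map_zero]
      rw [← Algebra.smul_def, smul_smul, hba]
      simp [two_smul]
    intro z
    have := DFunLike.congr_fun h z
    exact this
  · -- right antipode
    have hba : b * a = 2 := by rw [mul_comm]; exact hab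
    have h : (Algebra.TensorProduct.lmul' R (S := A)).comp
          ((Algebra.TensorProduct.map (AlgHom.id R A)
              (AdjoinRoot.liftHom p (AdjoinRoot.root p) (tateOort_aux_aeval a _ hx))).comp
            (AdjoinRoot.liftHom p T (tateOort_aux_aeval a T hTsq)))
        = (Algebra.ofId R A).comp (AdjoinRoot.liftHom p 0 (tateOort_aux_aeval a 0 h0)) := by
      apply AdjoinRoot.algHom_ext
      simp only [AlgHom.comp_apply, AdjoinRoot.liftHom_root, hT, map_sub, map_add, map_smul, map_one,
        Algebra.TensorProduct.map_tmul, AlgHom.id_apply,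
        Algebra.TensorProduct.lmul'_apply_tmul, one_mul, mul_one, hx, map_zero]
      rw [← Algebra.smul_def, smul_smul, hba]
      simp [two_smul]
    intro z
    have := DFunLike.congr_fun h z
    exact this
end

section
/- Let R be a commutative ring, let a, b ∈ R satisfy a·b = 2, and let S be a commutative R-algebra. Define ρ(s) to be the 2×2 matrix [[1, s], [0, 1 − b·s]] over S. Then for all s, t ∈ G_{a,b}(S) = {s ∈ S | s² = a·s} one has ρ(s ⊕ t) = ρ(s)·ρ(t) where s ⊕ t = s + t − b·s·t, ρ(0) is the identity matrix, ρ(s)·ρ(s) is the identity matrix (so each ρ(s) is invertible), and ρ is injective. Hence ρ is an injective group homomorphism from the group G_{a,b}(S) to GL₂(S); it is the regular representation of G_{a,b}. -/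
/-- **The regular representation of the Tate–Oort group.**
Let `R` be a commutative ring, `a b ∈ R` with `a * b = 2`, and `S` a commutative
`R`-algebra.  For `s ∈ S` let `ρ s = !![1, s; 0, 1 - b·s]`.  Then on
`G_{a,b}(S) = {s | s² = a·s}`, `ρ` turns the group law `s ⊕ t = s + t - b·s·t`
into matrix multiplication, `ρ 0 = 1`, `ρ s · ρ s = 1`, and `ρ` is injective;
hence `ρ` is an injective group homomorphism `G_{a,b}(S) → GL₂(S)`. -/
theorem stmt_2 (R S : Type*) [CommRing R] [CommRing S] [Algebra R S]
    (a b : R) (hab : a * b = 2) :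
    let a' : S := algebraMap R S a
    let b' : S := algebraMap R S b
    let ρ : S → Matrix (Fin 2) (Fin 2) S := fun s => !![1, s; 0, 1 - b' * s]
    -- `ρ` transforms the group law into matrix multiplication
    (∀ s t : S, s ^ 2 = a' * s → t ^ 2 = a' * t →
        ρ (s + t - b' * s * t) = ρ s * ρ t) ∧
    -- `ρ 0` is the identity matrix
    ρ 0 = 1 ∧
    -- each `ρ s` squares to the identity, so is invertible
    (∀ s : S, s ^ 2 = a' * s → ρ s * ρ s = 1) ∧
    -- `ρ` is injective on `G_{a,b}(S)`
    (∀ s t : S, s ^ 2 = a' * s → t ^ 2 = a' * t → ρ s = ρ t → s = t) := by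
  intro a' b' ρ
  have hab' : a' * b' = 2 := by
    simp only [a', b', ← map_mul, hab, map_ofNat]
  refine ⟨?_, ?_, ?_, ?_⟩
  · intro s t hs ht
    simp only [ρ, Matrix.mul_fin_two]
    congr 1 <;> ring
  · simp only [ρ]
    ext i j
    fin_cases i <;> fin_cases j <;> simp
  · intro s hs
    have h2 : b' * s ^ 2 = 2 * s := by
      rw [hs, ← mul_assoc, mul_comm b' a', hab']
    simp only [ρ, Matrix.mul_fin_two]
    ext i j
    fin_cases i <;> fin_cases j <;> simp
    · linear_combination -h2
    · linear_combination b' * h2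
  · intro s t _ _ h
    have := congrFun (congrFun h 0) 1
    simpa [ρ] using this
end

section
/- Let R be a commutative ring, let a, b ∈ R satisfy a·b = 2, let S be a commutative R-algebra, and let s ∈ S satisfy s² = a·s. Let σ_s be the S-algebra endomorphism of T = S[x₁, y₁, …, xₙ, yₙ] determined by σ_s(x_i) = x_i and σ_s(y_i) = s·x_i + (1 − b·s)·y_i. Then for all indices i, j the quadrics x_i·x_j and y_i² − a·x_i·y_i are fixed by σ_s, i.e. σ_s(x_i·x_j) = x_i·x_j and σ_s(y_i² − a·x_i·y_i) = y_i² − a·x_i·y_i. -/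
open MvPolynomial

/-- **Invariance of the quadrics `xᵢ·xⱼ` and `yᵢ² - a·xᵢ·yᵢ`.**
Variables of `S[x₁,y₁,…,xₙ,yₙ]` are indexed by `Fin n × Bool`, with
`X (i, false) = xᵢ` and `X (i, true) = yᵢ`.  For `s ∈ S` with `s² = a·s`, the
substitution `σ s` (fixing each `xᵢ` and sending `yᵢ ↦ s·xᵢ + (1 - b·s)·yᵢ`)
fixes the quadrics `xᵢ·xⱼ` and `yᵢ² - a·xᵢ·yᵢ` for all `i, j`. -/
theorem stmt_4 (R S : Type*) [CommRing R] [CommRing S] [Algebra R S] (n : ℕ)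
    (a b : R) (hab : a * b = 2)
    (s : S) (hs : s ^ 2 = algebraMap R S a * s) :
    let a' : S := algebraMap R S a
    let b' : S := algebraMap R S b
    let σ : MvPolynomial (Fin n × Bool) S →ₐ[S] MvPolynomial (Fin n × Bool) S :=
      aeval (fun v : Fin n × Bool =>
        if v.2 then C s * X (v.1, false) + C (1 - b' * s) * X (v.1, true)
        else X v)
    ∀ i j : Fin n,
      σ (X (i, false) * X (j, false)) = X (i, false) * X (j, false) ∧
      σ (X (i, true) ^ 2 - C a' * X (i, false) * X (i, true))
        = X (i, true) ^ 2 - C a' * X (i, false) * X (i, true) := by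
  intro a' b' σ i j
  have h1 : (C s : MvPolynomial (Fin n × Bool) S) ^ 2 = C a' * C s := by
    rw [← map_pow, ← map_mul, hs]
  have h2 : (C a' : MvPolynomial (Fin n × Bool) S) * C b' = 2 := by
    rw [← map_mul, ← map_mul, hab, map_ofNat, map_ofNat]
  constructor
  · simp [σ]
  · simp only [σ, map_sub, map_pow, map_mul, aeval_X, aeval_C, algebraMap_eq,
      if_true, Bool.false_eq_true, if_false, map_one]
    linear_combination (X (i, false) ^ 2 - 2 * C b' * X (i, false) * X (i, true)
        + C b' ^ 2 * X (i, true) ^ 2) * h1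
      + (C b' * C s * X (i, true) ^ 2 - C s * X (i, false) * X (i, true)) * h2
end

section
/- Let R be a commutative ring, let a, b ∈ R satisfy a·b = 2, let S be a commutative R-algebra, and let s ∈ S satisfy s² = a·s. Let σ_s be the S-algebra endomorphism of T = S[x₁, y₁, …, xₙ, yₙ] determined by σ_s(x_i) = x_i and σ_s(y_i) = s·x_i + (1 − b·s)·y_i. Then for all indices i, j the quadric x_i·y_j + x_j·y_i − b·y_i·y_j is fixed by σ_s, i.e. σ_s(x_i·y_j + x_j·y_i − b·y_i·y_j) = x_i·y_j + x_j·y_i − b·y_i·y_j. (When 2 = 0 in R this quadric coincides with x_i·y_j + x_j·y_i + b·y_i·y_j.) -/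
open MvPolynomial

/-- **Invariance of the quadrics `xᵢ·yⱼ + xⱼ·yᵢ - b·yᵢ·yⱼ`.**
Variables of `S[x₁,y₁,…,xₙ,yₙ]` are indexed by `Fin n × Bool`, with
`X (i, false) = xᵢ` and `X (i, true) = yᵢ`.  For `s ∈ S` with `s² = a·s`, the
substitution `σ s` (fixing each `xᵢ` and sending `yᵢ ↦ s·xᵢ + (1 - b·s)·yᵢ`)
fixes the quadric `xᵢ·yⱼ + xⱼ·yᵢ - b·yᵢ·yⱼ` for all `i, j`.
(When `2 = 0` in `R` this quadric coincides with `xᵢ·yⱼ + xⱼ·yᵢ + b·yᵢ·yⱼ`.) -/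
theorem stmt_5 (R S : Type*) [CommRing R] [CommRing S] [Algebra R S] (n : ℕ)
    (a b : R) (hab : a * b = 2)
    (s : S) (hs : s ^ 2 = algebraMap R S a * s) :
    let b' : S := algebraMap R S b
    let σ : MvPolynomial (Fin n × Bool) S →ₐ[S] MvPolynomial (Fin n × Bool) S :=
      aeval (fun v : Fin n × Bool =>
        if v.2 then C s * X (v.1, false) + C (1 - b' * s) * X (v.1, true)
        else X v)
    ∀ i j : Fin n,
      σ (X (i, false) * X (j, true) + X (j, false) * X (i, true)
          - C b' * X (i, true) * X (j, true))
        = X (i, false) * X (j, true) + X (j, false) * X (i, true)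
          - C b' * X (i, true) * X (j, true) := by
  intro b' σ i j
  have h2 : b' * algebraMap R S a = 2 := by
    rw [← map_mul, mul_comm, hab, map_ofNat]
  have hbs : b' * (s * s) = 2 * s := by
    have := congrArg (b' * ·) hs
    simp only [pow_two] at this
    rw [this, ← mul_assoc, h2]
  have hC : C (σ := Fin n × Bool) b' * (C s * C s) = 2 * C s := by
    rw [← map_mul, ← map_mul, hbs, map_mul, map_ofNat]
  simp only [σ, b', map_add, map_sub, map_mul, aeval_X, aeval_C, algebraMap_eq]
  simp only [if_true, Bool.false_eq_true, if_false, map_mul, map_sub, map_one]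
  linear_combination hC * (- X (i, false) * X (j, false)
    + C b' * (X (i, false) * X (j, true) + X (j, false) * X (i, true))
    - C b' * C b' * X (i, true) * X (j, true))
end
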